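/- Fix T > 0 and for t ∈ [0,T] let A_t := diag(1/(2(t²+1)), 10, 0) ∈ ℝ^{3×3}, and for x = (x₁, x₂, x₃)ᵀ ∈ ℝ³ let F(t,x) := (−x₁³, x₃, t x₂ + x₃)ᵀ and G(t,x) := diag(sin t, c x₁², 0). If c ∈ ℝ and p₂ > 0 satisfy p₂ c² ≤ 3/(4(T² + 1)), then for all t ∈ [0,T] and x, y ∈ ℝ³: 2⟨A_t x − A_t y, F(t,x) − F(t,y)⟩ + p₂ |G(t,x) − G(t,y)|² ≤ 10 |x − y|². -/
import Mathlib


open Matrix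

/-- Euclidean norm of a vector in `ℝ^d`. -/
noncomputable def vnorm {d : ℕ} (x : Fin d → ℝ) : ℝ :=
  Real.sqrt (∑ i, (x i) ^ 2)

/-- Euclidean inner product on `ℝ^d`. -/
def vdot {d : ℕ} (x y : Fin d → ℝ) : ℝ := ∑ i, x i * y i

/-- Frobenius norm of a real matrix: `|B| = sqrt (trace (Bᵀ * B))`. -/
noncomputable def mnorm {d m : ℕ} (B : Matrix (Fin d) (Fin m) ℝ) : ℝ :=
  Real.sqrt ((Bᵀ * B).trace)

/-- `A_t = diag(1/(2(t²+1)), 10, 0)`. -/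
noncomputable def A19 (t : ℝ) : Matrix (Fin 3) (Fin 3) ℝ :=
  Matrix.diagonal ![1 / (2 * (t ^ 2 + 1)), 10, 0]

/-- `F(t,x) = (−x₁³, x₃, t x₂ + x₃)ᵀ`. -/
def F19 (t : ℝ) (x : Fin 3 → ℝ) : Fin 3 → ℝ := ![-(x 0) ^ 3, x 2, t * x 1 + x 2]

/-- `G(t,x) = diag(sin t, c x₁², 0)`. -/
noncomputable def G19 (c : ℝ) (t : ℝ) (x : Fin 3 → ℝ) : Matrix (Fin 3) (Fin 3) ℝ :=
  Matrix.diagonal ![Real.sin t, c * (x 0) ^ 2, 0]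

theorem stmt19 (T : ℝ) (hT : 0 < T) (c p2 : ℝ) (hp2 : 0 < p2)
    (hc : p2 * c ^ 2 ≤ 3 / (4 * (T ^ 2 + 1))) :
    ∀ t ∈ Set.Icc (0:ℝ) T, ∀ x y : Fin 3 → ℝ,
      2 * vdot ((A19 t).mulVec x - (A19 t).mulVec y) (F19 t x - F19 t y) +
        p2 * mnorm (G19 c t x - G19 c t y) ^ 2 ≤
        10 * vnorm (x - y) ^ 2 := by
  rintro t ⟨ht0, htT⟩ x y
  have hs : (0:ℝ) < t ^ 2 + 1 := by positivity
  have hS : (0:ℝ) < T ^ 2 + 1 := by positivity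
  have hvn : vnorm (x - y) ^ 2 = ∑ i, (x i - y i) ^ 2 := by
    rw [vnorm, Real.sq_sqrt (by positivity)]
    simp
  have htr : (((G19 c t x - G19 c t y)ᵀ * (G19 c t x - G19 c t y)).trace)
      = (c * (x 0) ^ 2 - c * (y 0) ^ 2) ^ 2 := by
    simp [G19, Matrix.trace, Matrix.diag, Matrix.mul_apply, Matrix.diagonal,
      Fin.sum_univ_three]
    ring
  have hmn : mnorm (G19 c t x - G19 c t y) ^ 2
      = (c * (x 0) ^ 2 - c * (y 0) ^ 2) ^ 2 := by
    rw [mnorm, htr, Real.sq_sqrt (sq_nonneg _)]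
  rw [hvn, hmn]
  simp only [vdot, A19, F19, Matrix.mulVec_diagonal, Pi.sub_apply, Fin.sum_univ_three]
  simp only [Matrix.cons_val_zero, Matrix.cons_val_one, Matrix.head_cons,
    Matrix.cons_val_two, Matrix.tail_cons]
  have hc4 : p2 * c ^ 2 * (4 * (T ^ 2 + 1)) ≤ 3 := (le_div_iff₀ (by positivity)).mp hc
  have ht2 : t ^ 2 ≤ T ^ 2 := by nlinarith
  have hq : p2 * c ^ 2 * (t ^ 2 + 1) ≤ 3 / 4 := by
    nlinarith [mul_nonneg (mul_nonneg hp2.le (sq_nonneg c)) (sub_nonneg.mpr ht2)]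
  have key : p2 * (c * (x 0) ^ 2 - c * (y 0) ^ 2) ^ 2
      ≤ (x 0 - y 0) * ((x 0) ^ 3 - (y 0) ^ 3) / (t ^ 2 + 1) := by
    rw [le_div_iff₀ hs]
    nlinarith [mul_le_mul_of_nonneg_right hq
        (mul_nonneg (sq_nonneg (x 0 - y 0)) (sq_nonneg (x 0 + y 0))),
      mul_nonneg (sq_nonneg (x 0 - y 0)) (sq_nonneg (x 0 - y 0))]
  have hdiv : 2 * ((1 / (2 * (t ^ 2 + 1)) * x 0 - 1 / (2 * (t ^ 2 + 1)) * y 0) *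
      (-(x 0) ^ 3 - -(y 0) ^ 3))
      = -((x 0 - y 0) * ((x 0) ^ 3 - (y 0) ^ 3) / (t ^ 2 + 1)) := by
    field_simp
    ring
  nlinarith [key, sq_nonneg ((x 1 - y 1) - (x 2 - y 2)), hdiv]
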